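/- (Harmonic product formula for the polynomial-valued regularization.) Extend ζ*_{x,y}(·;T) ℚ-linearly to the ℚ-vector space spanned by indices. Then for all indices k and l, ζ*_{x,y}(k;T) · ζ*_{x,y}(l;T) = ζ*_{x,y}(k * l;T) in ℝ[x,y,T]. -/

import Mathlib

open scoped BigOperators

/-- The Riemann zeta value ζ(n) = Σ_{m ≥ 1} 1/mⁿ. -/
noncomputable def rzeta (n : ℕ) : ℝ := ∑' m : ℕ+, 1 / (m : ℝ) ^ n

/-- The multiple zeta value ζ(k₁,…,k_r) = Σ_{m₁ > ⋯ > m_r ≥ 1} 1/(m₁^{k₁} ⋯ m_r^{k_r}). -/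
noncomputable def mzv (k : List ℕ) : ℝ :=
  ∑' m : {m : Fin k.length → ℕ+ // StrictAnti m}, ∏ i, 1 / ((m.1 i : ℝ) ^ k.get i)

/-- An index is a finite sequence of positive integers. -/
def IsIndex (k : List ℕ) : Prop := ∀ a ∈ k, 1 ≤ a

/-- An index is admissible if it is empty or its first entry exceeds 1. -/
def IsAdmissible (k : List ℕ) : Prop := ∀ a ∈ k.head?, 2 ≤ a

/-- Auxiliary harmonic product, on *reversed* indices (peeling the last entries). -/
noncomputable def harmAux : List ℕ → List ℕ → (List ℕ →₀ ℚ)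
  | [], b => Finsupp.single b 1
  | a, [] => Finsupp.single a 1
  | ka :: as, lb :: bs =>
      Finsupp.mapDomain (lb :: ·) (harmAux (ka :: as) bs)
      + Finsupp.mapDomain (ka :: ·) (harmAux as (lb :: bs))
      + Finsupp.mapDomain ((ka + lb) :: ·) (harmAux as bs)

/-- The harmonic (stuffle) product of two indices, as an element of the
ℚ-vector space freely spanned by indices. -/
noncomputable def harm (k l : List ℕ) : List ℕ →₀ ℚ :=
  Finsupp.mapDomain List.reverse (harmAux k.reverse l.reverse)

/-- The word 0^{k₁-1}1 ⋯ 0^{k_r-1}1 associated to an index. -/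
def indexToWord (k : List ℕ) : List Bool :=
  k.flatMap fun a => List.replicate (a - 1) false ++ [true]

/-- Parse a word in letters 0, 1 back into an index. -/
def wordToIndex : List Bool → List ℕ
  | [] => []
  | true :: w => 1 :: wordToIndex w
  | false :: w =>
      match wordToIndex w with
      | [] => []
      | a :: rest => (a + 1) :: rest

/-- The shuffle product of two words. -/
noncomputable def wordShuffle : List Bool → List Bool → (List Bool →₀ ℚ)
  | [], b => Finsupp.single b 1
  | a, [] => Finsupp.single a 1
  | x :: xs, y :: ys =>
      Finsupp.mapDomain (x :: ·) (wordShuffle xs (y :: ys))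
      + Finsupp.mapDomain (y :: ·) (wordShuffle (x :: xs) ys)

/-- The shuffle product of two indices, as an element of the
ℚ-vector space freely spanned by indices. -/
noncomputable def shuf (k l : List ℕ) : List ℕ →₀ ℚ :=
  Finsupp.mapDomain wordToIndex (wordShuffle (indexToWord k) (indexToWord l))

/-- ℚ-linear extension of a map defined on indices. -/
noncomputable def Zext (Z : List ℕ → Polynomial ℝ) (v : List ℕ →₀ ℚ) : Polynomial ℝ :=
  v.sum fun m c => c • Z m

/-- Exponential of a formal power series (with zero constant term) over a field. -/
noncomputable def pexp {R : Type*} [Field R] (f : PowerSeries R) : PowerSeries R :=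
  PowerSeries.mk fun n =>
    ∑ m ∈ Finset.range (n + 1), PowerSeries.coeff n (f ^ m) / (m.factorial : R)

/-- A(u) = exp(Σ_{n≥2} ((-1)ⁿ/n) ζ(n) uⁿ) ∈ ℝ[[u]]. -/
noncomputable def Aseries : PowerSeries ℝ :=
  pexp (PowerSeries.mk fun n => if 2 ≤ n then (-1 : ℝ) ^ n / n * rzeta n else 0)

/-- The linear map ρ determined by ρ(Tᵐ/m!) = (coefficient of uᵐ in A(u)e^{Tu}),
i.e. ρ(Tᵐ) = m! Σ_{j≤m} A_{m-j} Tʲ/j!. -/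
noncomputable def rho {R : Type*} [Field R] (A : PowerSeries R) (P : Polynomial R) :
    Polynomial R :=
  P.sum fun m a =>
    a • (m.factorial : R) •
      ∑ j ∈ Finset.range (m + 1),
        (PowerSeries.coeff (m - j) A / (j.factorial : R)) • (Polynomial.X : Polynomial R) ^ j

/-- ζ*_{x,y}(k;T) = Σ_{i=0}^{r} x^{k₁+⋯+kᵢ} y^{k_{i+1}+⋯+k_r}
Z*(kᵢ,…,k₁;T)·Z*(k_{i+1},…,k_r;T) as an element of ℝ[x,y,T],
where x, y, T are the variables X 0, X 1, X 2. -/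
noncomputable def zetaXYpoly (Z : List ℕ → Polynomial ℝ) (k : List ℕ) :
    MvPolynomial (Fin 3) ℝ :=
  ∑ i ∈ Finset.range (k.length + 1),
    MvPolynomial.X 0 ^ (k.take i).sum * MvPolynomial.X 1 ^ (k.drop i).sum
      * Polynomial.aeval (MvPolynomial.X 2) (Z (k.take i).reverse)
      * Polynomial.aeval (MvPolynomial.X 2) (Z (k.drop i))


section HarmonicAux

lemma harmAux_nil_left (b : List ℕ) : harmAux [] b = Finsupp.single b 1 := by simp [harmAux]

lemma harmAux_nil_right (a : List ℕ) : harmAux a [] = Finsupp.single a 1 := by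
  cases a <;> simp [harmAux]

lemma harmAux_cons_cons (x y : ℕ) (xs ys : List ℕ) : harmAux (x::xs) (y::ys) =
      Finsupp.mapDomain (y :: ·) (harmAux (x :: xs) ys)
      + Finsupp.mapDomain (x :: ·) (harmAux xs (y :: ys))
      + Finsupp.mapDomain ((x + y) :: ·) (harmAux xs ys) := by rw [harmAux]

lemma mapDomain_mapDomain (f g : List ℕ → List ℕ) (v : List ℕ →₀ ℚ) :
    Finsupp.mapDomain f (Finsupp.mapDomain g v) = Finsupp.mapDomain (fun m => f (g m)) v := by
  rw [← Finsupp.mapDomain_comp]; rfl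

lemma harmAux_concat (a b : ℕ) (as bs : List ℕ) :
    harmAux (as ++ [a]) (bs ++ [b])
      = Finsupp.mapDomain (· ++ [b]) (harmAux (as ++ [a]) bs)
        + Finsupp.mapDomain (· ++ [a]) (harmAux as (bs ++ [b]))
        + Finsupp.mapDomain (· ++ [a + b]) (harmAux as bs) := by
  induction as generalizing bs with
  | nil =>
    induction bs with
    | nil =>
      simp only [List.nil_append, harmAux_nil_left, harmAux_nil_right, harmAux_cons_cons,
        Finsupp.mapDomain_single, List.cons_append, List.nil_append]
      abel
    | cons c cs ih2 =>
      simp only [List.nil_append, List.cons_append] at ih2 ⊢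
      rw [harmAux_cons_cons, ih2, harmAux_cons_cons a c ([]) cs]
      simp only [harmAux_nil_left, Finsupp.mapDomain_add, Finsupp.mapDomain_single,
        mapDomain_mapDomain, List.cons_append, List.append_assoc, List.singleton_append]
      abel
  | cons x xs ih =>
    induction bs with
    | nil =>
      have h1 := ih []
      simp only [List.nil_append] at h1
      simp only [List.cons_append, List.nil_append]
      rw [harmAux_cons_cons, h1, harmAux_cons_cons x b xs []]
      simp only [harmAux_nil_left, harmAux_nil_right, Finsupp.mapDomain_add,
        Finsupp.mapDomain_single, mapDomain_mapDomain, List.cons_append, List.append_assoc,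
        List.singleton_append]
      abel
    | cons y ys ih2 =>
      have h1 := ih (y :: ys)
      have h3 := ih ys
      simp only [List.cons_append] at h1 h3 ih2 ⊢
      rw [harmAux_cons_cons, ih2, h1, h3,
        harmAux_cons_cons x y (xs ++ [a]) ys, harmAux_cons_cons x y xs (ys ++ [b]),
        harmAux_cons_cons x y xs ys]
      simp only [Finsupp.mapDomain_add, mapDomain_mapDomain, List.cons_append]
      abel

lemma harmAux_reverse (as bs : List ℕ) :
    harmAux as.reverse bs.reverse = Finsupp.mapDomain List.reverse (harmAux as bs) := by
  induction as generalizing bs with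
  | nil =>
    simp [harmAux_nil_left, Finsupp.mapDomain_single]
  | cons x xs ih =>
    induction bs with
    | nil =>
      simp [harmAux_nil_right, Finsupp.mapDomain_single]
    | cons y ys ih2 =>
      have h1 : harmAux (x :: xs).reverse ys.reverse
          = Finsupp.mapDomain List.reverse (harmAux (x :: xs) ys) := ih2
      have h2 := ih (y :: ys)
      have h3 := ih ys
      simp only [List.reverse_cons] at h1 h2 h3 ⊢
      rw [harmAux_concat, h1, h2, h3, harmAux_cons_cons]
      simp only [Finsupp.mapDomain_add, mapDomain_mapDomain, List.reverse_cons]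
lemma harm_eq (k l : List ℕ) : harm k l = harmAux k l := by
  rw [harm, show harmAux k.reverse l.reverse
      = Finsupp.mapDomain List.reverse (harmAux k l) by
      simpa using harmAux_reverse k l,
    mapDomain_mapDomain]
  simp only [List.reverse_reverse]
  exact Finsupp.mapDomain_id


lemma harmAux_support_sum (as bs : List ℕ) :
    ∀ m ∈ (harmAux as bs).support, m.sum = as.sum + bs.sum := by
  induction as generalizing bs with
  | nil =>
    intro m hm
    rw [harmAux_nil_left] at hm
    simp only [Finsupp.support_single_ne_zero _ one_ne_zero, Finset.mem_singleton] at hm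
    simp [hm]
  | cons x xs ih =>
    induction bs with
    | nil =>
      intro m hm
      rw [harmAux_nil_right] at hm
      simp only [Finsupp.support_single_ne_zero _ one_ne_zero, Finset.mem_singleton] at hm
      simp [hm]
    | cons y ys ih2 =>
      intro m hm
      rw [harmAux_cons_cons] at hm
      have hm' := Finsupp.support_add hm
      rw [Finset.mem_union] at hm'
      rcases hm' with hm' | hm'
      · have hm'' := Finsupp.support_add hm'
        rw [Finset.mem_union] at hm''
        rcases hm'' with h | h
        · obtain ⟨m', hm1, rfl⟩ := Finset.mem_image.1 (Finsupp.mapDomain_support h)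
          have := ih2 m' hm1
          simp only [List.sum_cons] at this ⊢
          omega
        · obtain ⟨m', hm1, rfl⟩ := Finset.mem_image.1 (Finsupp.mapDomain_support h)
          have := ih (y :: ys) m' hm1
          simp only [List.sum_cons] at this ⊢
          omega
      · obtain ⟨m', hm1, rfl⟩ := Finset.mem_image.1 (Finsupp.mapDomain_support hm')
        have := ih ys m' hm1
        simp only [List.sum_cons] at this ⊢
        omega

section Ssum
variable {M : Type*} [AddCommMonoid M] [Module ℚ M]

/-- linear evaluation of a formal sum of lists -/
noncomputable def S1 (v : List ℕ →₀ ℚ) (f : List ℕ → M) : M := v.sum fun m c => c • f m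

lemma S1_add (u v : List ℕ →₀ ℚ) (f : List ℕ → M) : S1 (u + v) f = S1 u f + S1 v f :=
  Finsupp.sum_add_index' (fun _ => zero_smul _ _) (fun _ _ _ => add_smul _ _ _)

lemma S1_mapDomain (h : List ℕ → List ℕ) (v : List ℕ →₀ ℚ) (f : List ℕ → M) :
    S1 (Finsupp.mapDomain h v) f = S1 v (fun m => f (h m)) :=
  Finsupp.sum_mapDomain_index (fun _ => zero_smul _ _) (fun _ _ _ => add_smul _ _ _)

lemma S1_single (m : List ℕ) (f : List ℕ → M) : S1 (Finsupp.single m 1) f = f m := by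
  rw [S1, Finsupp.sum_single_index (h := fun m c => c • f m) (zero_smul _ _), one_smul]

lemma S1_addf (v : List ℕ →₀ ℚ) (f g : List ℕ → M) :
    S1 v (fun m => f m + g m) = S1 v f + S1 v g := by
  simp [S1, Finsupp.sum, smul_add, Finset.sum_add_distrib]

noncomputable def S2 (u v : List ℕ →₀ ℚ) (g : List ℕ → List ℕ → M) : M :=
  S1 u fun p => S1 v fun s => g p s

lemma S2_add_left (u u' v : List ℕ →₀ ℚ) (g : List ℕ → List ℕ → M) :
    S2 (u + u') v g = S2 u v g + S2 u' v g := S1_add _ _ _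

lemma S2_map_left (h : List ℕ → List ℕ) (u v : List ℕ →₀ ℚ) (g : List ℕ → List ℕ → M) :
    S2 (Finsupp.mapDomain h u) v g = S2 u v (fun p s => g (h p) s) := S1_mapDomain _ _ _

lemma S2_single_left (p : List ℕ) (v : List ℕ →₀ ℚ) (g : List ℕ → List ℕ → M) :
    S2 (Finsupp.single p 1) v g = S1 v (fun s => g p s) := S1_single _ _

/-- splitting a cons at all points -/
lemma splitsum_cons (h : ℕ) (m : List ℕ) (g : List ℕ → List ℕ → M) :
    ∑ i ∈ Finset.range ((h :: m).length + 1), g ((h :: m).take i) ((h :: m).drop i)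
      = g [] (h :: m) + ∑ i ∈ Finset.range (m.length + 1), g (h :: m.take i) (m.drop i) := by
  rw [List.length_cons, Finset.sum_range_succ']
  simp only [List.take_succ_cons, List.drop_succ_cons, List.take_zero, List.drop_zero]
  rw [add_comm]

/-- The coproduct compatibility (key combinatorial lemma). -/
lemma harm_split (g : List ℕ → List ℕ → M) (k l : List ℕ) :
    S1 (harmAux k l) (fun m => ∑ i ∈ Finset.range (m.length + 1), g (m.take i) (m.drop i))
      = ∑ i ∈ Finset.range (k.length + 1), ∑ j ∈ Finset.range (l.length + 1),
          S2 (harmAux (k.take i) (l.take j)) (harmAux (k.drop i) (l.drop j)) g := by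
  induction k generalizing g l with
  | nil =>
    simp [harmAux_nil_left, S1_single, S2_single_left, List.take_nil, List.drop_nil]
  | cons x xs ih =>
    induction l generalizing g with
    | nil =>
      simp [harmAux_nil_right, harmAux_nil_left, S1_single, S2_single_left,
        List.take_nil, List.drop_nil]
    | cons y ys ih2 =>
      -- LHS decomposition
      have hsplit : ∀ (h : ℕ) (v : List ℕ →₀ ℚ),
          S1 (Finsupp.mapDomain (h :: ·) v)
            (fun m => ∑ i ∈ Finset.range (m.length + 1), g (m.take i) (m.drop i))
          = S1 (Finsupp.mapDomain (h :: ·) v) (fun m => g [] m)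
            + S1 v (fun m => ∑ i ∈ Finset.range (m.length + 1),
                (fun p s => g (h :: p) s) (m.take i) (m.drop i)) := by
        intro h v
        rw [S1_mapDomain, S1_mapDomain]
        rw [← S1_addf]
        refine congrArg (S1 v) (funext fun m => ?_)
        exact splitsum_cons h m g
      rw [harmAux_cons_cons, S1_add, S1_add, hsplit, hsplit, hsplit,
        ih2 (fun p s => g (y :: p) s), ih (fun p s => g (x :: p) s) (y :: ys),
        ih (fun p s => g ((x + y) :: p) s) ys]
      -- recombine the "empty prefix" parts
      have hempty : S1 (Finsupp.mapDomain (y :: ·) (harmAux (x :: xs) ys)) (fun m => g [] m)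
          + S1 (Finsupp.mapDomain (x :: ·) (harmAux xs (y :: ys))) (fun m => g [] m)
          + S1 (Finsupp.mapDomain ((x + y) :: ·) (harmAux xs ys)) (fun m => g [] m)
          = S1 (harmAux (x :: xs) (y :: ys)) (fun m => g [] m) := by
        rw [harmAux_cons_cons, S1_add, S1_add]
      -- generic sum regrouping lemmas
      have hsum1 : ∀ (m : ℕ) (F : ℕ → M), ∑ j ∈ Finset.range (m + 1 + 1), F j
          = F 0 + ∑ j ∈ Finset.range (m + 1), F (j + 1) := by
        intro m F; rw [Finset.sum_range_succ', add_comm]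
      have hsum2 : ∀ (n m : ℕ) (E : ℕ → ℕ → M),
          ∑ i ∈ Finset.range (n + 1 + 1), ∑ j ∈ Finset.range m, E i j
          = (∑ j ∈ Finset.range m, E 0 j)
            + ∑ i ∈ Finset.range (n + 1), ∑ j ∈ Finset.range m, E (i + 1) j := by
        intro n m E; rw [Finset.sum_range_succ', add_comm]
      have hsum2' : ∀ (n m : ℕ) (E : ℕ → ℕ → M),
          ∑ i ∈ Finset.range n, ∑ j ∈ Finset.range (m + 1 + 1), E i j
          = (∑ i ∈ Finset.range n, E i 0)
            + ∑ i ∈ Finset.range n, ∑ j ∈ Finset.range (m + 1), E i (j + 1) := by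
        intro n m E
        rw [← Finset.sum_add_distrib]
        refine Finset.sum_congr rfl fun i _ => ?_
        rw [Finset.sum_range_succ', add_comm]
      -- pointwise identification of RHS summands
      have hD00 : S2 (harmAux (List.take 0 (x :: xs)) (List.take 0 (y :: ys)))
            (harmAux (List.drop 0 (x :: xs)) (List.drop 0 (y :: ys))) g
          = S1 (harmAux (x :: xs) (y :: ys)) (fun m => g [] m) := by
        simp only [List.take_zero, List.drop_zero]
        rw [harmAux_nil_left, S2_single_left]
      have hD0j : ∀ j : ℕ, S2 (harmAux (List.take 0 (x :: xs)) (List.take (j + 1) (y :: ys)))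
            (harmAux (List.drop 0 (x :: xs)) (List.drop (j + 1) (y :: ys))) g
          = S2 (harmAux (List.take 0 (x :: xs)) (List.take j ys))
              (harmAux (List.drop 0 (x :: xs)) (List.drop j ys)) (fun p s => g (y :: p) s) := by
        intro j
        simp only [List.take_zero, List.drop_zero, List.take_succ_cons, List.drop_succ_cons]
        rw [harmAux_nil_left, harmAux_nil_left, S2_single_left, S2_single_left]
      have hDi0 : ∀ i : ℕ, S2 (harmAux (List.take (i + 1) (x :: xs)) (List.take 0 (y :: ys)))
            (harmAux (List.drop (i + 1) (x :: xs)) (List.drop 0 (y :: ys))) g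
          = S2 (harmAux (List.take i xs) (List.take 0 (y :: ys)))
              (harmAux (List.drop i xs) (List.drop 0 (y :: ys))) (fun p s => g (x :: p) s) := by
        intro i
        simp only [List.take_zero, List.drop_zero, List.take_succ_cons, List.drop_succ_cons]
        rw [harmAux_nil_right, harmAux_nil_right, S2_single_left, S2_single_left]
      have hD11 : ∀ i j : ℕ,
          S2 (harmAux (List.take (i + 1) (x :: xs)) (List.take (j + 1) (y :: ys)))
            (harmAux (List.drop (i + 1) (x :: xs)) (List.drop (j + 1) (y :: ys))) g
          = S2 (harmAux (List.take (i + 1) (x :: xs)) (List.take j ys))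
              (harmAux (List.drop (i + 1) (x :: xs)) (List.drop j ys)) (fun p s => g (y :: p) s)
            + S2 (harmAux (List.take i xs) (List.take (j + 1) (y :: ys)))
                (harmAux (List.drop i xs) (List.drop (j + 1) (y :: ys))) (fun p s => g (x :: p) s)
            + S2 (harmAux (List.take i xs) (List.take j ys))
                (harmAux (List.drop i xs) (List.drop j ys)) (fun p s => g ((x + y) :: p) s) := by
        intro i j
        simp only [List.take_succ_cons, List.drop_succ_cons]
        rw [harmAux_cons_cons x y (List.take i xs) (List.take j ys),
          S2_add_left, S2_add_left, S2_map_left, S2_map_left, S2_map_left]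
      simp only [List.length_cons]
      rw [hsum2 xs.length (ys.length + 1 + 1)]
      rw [hsum2 xs.length (ys.length + 1)]
      rw [hsum1 ys.length]
      rw [hsum2' (xs.length + 1) ys.length, hsum2' (xs.length + 1) ys.length]
      simp only [hD00, hD0j, hDi0, hD11, Finset.sum_add_distrib]
      rw [← hempty]
      abel

end Ssum

section Alg
variable {R : Type*} [CommRing R] [Algebra ℚ R]
lemma S1_const_mul (v : List ℕ →₀ ℚ) (C : R) (F : List ℕ → R) :
    S1 v (fun m => C * F m) = C * S1 v F := by
  simp [S1, Finsupp.sum, Finset.mul_sum, mul_smul_comm]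
lemma S1_mul_const (v : List ℕ →₀ ℚ) (C : R) (F : List ℕ → R) :
    S1 v (fun m => F m * C) = S1 v F * C := by
  simp [S1, Finsupp.sum, Finset.sum_mul, smul_mul_assoc]
end Alg

lemma IsIndex.take {k : List ℕ} (hk : IsIndex k) (i : ℕ) : IsIndex (k.take i) :=
  fun a ha => hk a (List.take_subset i k ha)
lemma IsIndex.drop {k : List ℕ} (hk : IsIndex k) (i : ℕ) : IsIndex (k.drop i) :=
  fun a ha => hk a (List.drop_subset i k ha)
lemma IsIndex.reverse {k : List ℕ} (hk : IsIndex k) : IsIndex k.reverse :=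
  fun a ha => hk a (List.mem_reverse.1 ha)


section Main
variable (Zs : List ℕ → Polynomial ℝ)


/-- aeval of the Z-extension of a harmonic product -/
lemma Zfact (hZs_mul : ∀ k l, IsIndex k → IsIndex l → Zext Zs (harm k l) = Zs k * Zs l)
    (p q : List ℕ) (hp : IsIndex p) (hq : IsIndex q) :
    S1 (harmAux p q) (fun s => Polynomial.aeval (MvPolynomial.X (2 : Fin 3) :
        MvPolynomial (Fin 3) ℝ) (Zs s))
      = Polynomial.aeval (MvPolynomial.X (2 : Fin 3)) (Zs p)
        * Polynomial.aeval (MvPolynomial.X (2 : Fin 3)) (Zs q) := by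
  have h1 : S1 (harmAux p q) (fun s => Polynomial.aeval (MvPolynomial.X (2 : Fin 3) :
        MvPolynomial (Fin 3) ℝ) (Zs s))
      = Polynomial.aeval (MvPolynomial.X (2 : Fin 3)) (Zext Zs (harmAux p q)) := by
    rw [Zext, map_finsuppSum, S1]
    refine Finsupp.sum_congr fun s _ => ?_
    exact (map_rat_smul ((Polynomial.aeval (MvPolynomial.X (2 : Fin 3) :
      MvPolynomial (Fin 3) ℝ) : Polynomial ℝ →ₐ[ℝ] MvPolynomial (Fin 3) ℝ)
        : Polynomial ℝ →ₐ[ℝ] MvPolynomial (Fin 3) ℝ) _ _).symm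
  rw [h1, ← harm_eq, hZs_mul p q hp hq, map_mul]

lemma ZfactRev (hZs_mul : ∀ k l, IsIndex k → IsIndex l → Zext Zs (harm k l) = Zs k * Zs l) (p q : List ℕ) (hp : IsIndex p) (hq : IsIndex q) :
    S1 (harmAux p q) (fun s => Polynomial.aeval (MvPolynomial.X (2 : Fin 3) :
        MvPolynomial (Fin 3) ℝ) (Zs s.reverse))
      = Polynomial.aeval (MvPolynomial.X (2 : Fin 3)) (Zs p.reverse)
        * Polynomial.aeval (MvPolynomial.X (2 : Fin 3)) (Zs q.reverse) := by
  have h1 := (S1_mapDomain (M := MvPolynomial (Fin 3) ℝ) List.reverse (harmAux p q)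
    (fun s => Polynomial.aeval (MvPolynomial.X (2 : Fin 3) : MvPolynomial (Fin 3) ℝ) (Zs s))).symm
  rw [h1, ← harmAux_reverse, Zfact Zs hZs_mul p.reverse q.reverse hp.reverse hq.reverse]

lemma hterm (hZs_mul : ∀ k l, IsIndex k → IsIndex l → Zext Zs (harm k l) = Zs k * Zs l) (k1 l1 k2 l2 : List ℕ) (hk1 : IsIndex k1) (hl1 : IsIndex l1)
    (hk2 : IsIndex k2) (hl2 : IsIndex l2) :
    S2 (harmAux k1 l1) (harmAux k2 l2)
      (fun p s => (MvPolynomial.X 0 : MvPolynomial (Fin 3) ℝ) ^ p.sum * MvPolynomial.X 1 ^ s.sum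
        * Polynomial.aeval (MvPolynomial.X 2) (Zs p.reverse)
        * Polynomial.aeval (MvPolynomial.X 2) (Zs s))
      = ((MvPolynomial.X 0 : MvPolynomial (Fin 3) ℝ) ^ k1.sum * MvPolynomial.X 1 ^ k2.sum
          * Polynomial.aeval (MvPolynomial.X 2) (Zs k1.reverse)
          * Polynomial.aeval (MvPolynomial.X 2) (Zs k2))
        * (MvPolynomial.X 0 ^ l1.sum * MvPolynomial.X 1 ^ l2.sum
          * Polynomial.aeval (MvPolynomial.X 2) (Zs l1.reverse)
          * Polynomial.aeval (MvPolynomial.X 2) (Zs l2)) := by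
  have hinner : ∀ p : List ℕ,
      S1 (harmAux k2 l2) (fun s => (MvPolynomial.X 0 : MvPolynomial (Fin 3) ℝ) ^ p.sum * MvPolynomial.X 1 ^ s.sum
        * Polynomial.aeval (MvPolynomial.X 2) (Zs p.reverse)
        * Polynomial.aeval (MvPolynomial.X 2) (Zs s))
      = ((MvPolynomial.X 0 : MvPolynomial (Fin 3) ℝ) ^ p.sum * MvPolynomial.X 1 ^ (k2.sum + l2.sum)
          * Polynomial.aeval (MvPolynomial.X 2) (Zs p.reverse))
        * (Polynomial.aeval (MvPolynomial.X 2) (Zs k2)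
          * Polynomial.aeval (MvPolynomial.X 2) (Zs l2)) := by
    intro p
    have e1 : S1 (harmAux k2 l2) (fun s => (MvPolynomial.X 0 : MvPolynomial (Fin 3) ℝ) ^ p.sum * MvPolynomial.X 1 ^ s.sum
        * Polynomial.aeval (MvPolynomial.X 2) (Zs p.reverse)
        * Polynomial.aeval (MvPolynomial.X 2) (Zs s))
        = S1 (harmAux k2 l2) (fun s => ((MvPolynomial.X 0 : MvPolynomial (Fin 3) ℝ) ^ p.sum
            * MvPolynomial.X 1 ^ (k2.sum + l2.sum)
            * Polynomial.aeval (MvPolynomial.X 2) (Zs p.reverse))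
          * Polynomial.aeval (MvPolynomial.X 2) (Zs s)) := by
      refine Finsupp.sum_congr fun s hs => ?_
      beta_reduce
      rw [harmAux_support_sum k2 l2 s hs]
    rw [e1, S1_const_mul, Zfact Zs hZs_mul k2 l2 hk2 hl2]
  have e2 : S2 (harmAux k1 l1) (harmAux k2 l2)
      (fun p s => (MvPolynomial.X 0 : MvPolynomial (Fin 3) ℝ) ^ p.sum * MvPolynomial.X 1 ^ s.sum
        * Polynomial.aeval (MvPolynomial.X 2) (Zs p.reverse)
        * Polynomial.aeval (MvPolynomial.X 2) (Zs s))
      = S1 (harmAux k1 l1) (fun p => ((MvPolynomial.X 0 : MvPolynomial (Fin 3) ℝ) ^ (k1.sum + l1.sum)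
            * MvPolynomial.X 1 ^ (k2.sum + l2.sum)
            * (Polynomial.aeval (MvPolynomial.X 2) (Zs k2)
              * Polynomial.aeval (MvPolynomial.X 2) (Zs l2)))
          * Polynomial.aeval (MvPolynomial.X 2) (Zs p.reverse)) := by
    rw [S2]
    refine Finsupp.sum_congr fun p hp => ?_
    beta_reduce
    rw [hinner p, harmAux_support_sum k1 l1 p hp]
    exact congrArg (fun z => (harmAux k1 l1) p • z) (by ring)
  rw [e2, S1_const_mul, ZfactRev Zs hZs_mul k1 l1 hk1 hl1]
  ring



/-- **Harmonic product formula for the polynomial-valued regularization.**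
For all indices k, l we have ζ*_{x,y}(k;T)·ζ*_{x,y}(l;T) = ζ*_{x,y}(k * l;T),
where ζ*_{x,y}(·;T) is extended ℚ-linearly to the span of indices. -/
theorem zetaXY_harmonic_product
    (Zs : List ℕ → Polynomial ℝ)
    (hZs_adm : ∀ k, IsIndex k → IsAdmissible k → Zs k = Polynomial.C (mzv k))
    (hZs_one : Zs [1] = Polynomial.X)
    (hZs_mul : ∀ k l, IsIndex k → IsIndex l → Zext Zs (harm k l) = Zs k * Zs l)
    (k l : List ℕ) (hk : IsIndex k) (hl : IsIndex l) :
    zetaXYpoly Zs k * zetaXYpoly Zs l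
      = (harm k l).sum fun m c => c • zetaXYpoly Zs m := by
  have hrhs : ((harm k l).sum fun m c => c • zetaXYpoly Zs m)
      = S1 (harmAux k l) (fun m => ∑ i ∈ Finset.range (m.length + 1),
          (fun p s => (MvPolynomial.X 0 : MvPolynomial (Fin 3) ℝ) ^ p.sum * MvPolynomial.X 1 ^ s.sum
            * Polynomial.aeval (MvPolynomial.X 2) (Zs p.reverse)
            * Polynomial.aeval (MvPolynomial.X 2) (Zs s)) (m.take i) (m.drop i)) := by
    rw [harm_eq]; rfl
  rw [hrhs, harm_split (fun p s => (MvPolynomial.X 0 : MvPolynomial (Fin 3) ℝ) ^ p.sum * MvPolynomial.X 1 ^ s.sum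
            * Polynomial.aeval (MvPolynomial.X 2) (Zs p.reverse)
            * Polynomial.aeval (MvPolynomial.X 2) (Zs s)) k l,
    zetaXYpoly, zetaXYpoly, Finset.sum_mul_sum]
  refine Finset.sum_congr rfl fun i _ => ?_
  refine Finset.sum_congr rfl fun j _ => ?_
  exact (hterm Zs hZs_mul (k.take i) (l.take j) (k.drop i) (l.drop j)
    (hk.take i) (hl.take j) (hk.drop i) (hl.drop j)).symm
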